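/- Let n, m, k ≥ 1 and d_0, d_1, …, d_{2k} be positive integers with d_0 = n, d_{2k} = m ≥ 2n+1, and d_j ≥ 2n+1 for every even index j ≥ 2. For j = 1,…,k let f_j : ℝ^{d_{2j−2}} → ℝ^{d_{2j−1}} be injective and locally Lipschitz maps (in particular, injective ReLU neural networks are such maps). Let (B_1,…,B_k) be random matrices B_j ∈ ℝ^{d_{2j}×d_{2j−1}} whose joint distribution is absolutely continuous with respect to the Lebesgue measure on ∏_{j=1}^k ℝ^{d_{2j}×d_{2j−1}}. Then the composed map F_k = B_k ∘ f_k ∘ B_{k−1} ∘ f_{k−1} ∘ ⋯ ∘ B_1 ∘ f_1 : ℝ^n → ℝ^m is injective almost surely. -/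

import Mathlib

open MeasureTheory ProbabilityTheory

/-- The composed map `F_k = B_{k-1} ∘ f_{k-1} ∘ ⋯ ∘ B_0 ∘ f_0` (0-indexed): each
`f_j : ℝ^{d(2j)} → ℝ^{d(2j+1)}` is followed by the matrix `B_j ∈ ℝ^{d(2j+2)×d(2j+1)}`. -/
noncomputable def comp (d : ℕ → ℕ)
    (f : ∀ j : ℕ, (Fin (d (2 * j)) → ℝ) → (Fin (d (2 * j + 1)) → ℝ))
    (B : ∀ j : ℕ, Fin (d (2 * j + 2)) → Fin (d (2 * j + 1)) → ℝ) :
    (k : ℕ) → (Fin (d 0) → ℝ) → (Fin (d (2 * k)) → ℝ)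
  | 0, x => x
  | (k + 1), x => (Matrix.of (B k)).mulVec (f k (comp d f B k x))

open Set Metric
open scoped ENNReal NNReal

lemma locLip_lipschitzOnWith_compact {E F : Type*} [MetricSpace E] [MetricSpace F]
    {f : E → F} (hf : LocallyLipschitz f) {K : Set E} (hK : IsCompact K) :
    ∃ L : NNReal, LipschitzOnWith L f K := by
  have hcont := hf.continuous
  choose Lx tx htx hlip using hf
  choose rx hrx hball using fun x => Metric.mem_nhds_iff.1 (htx x)
  obtain ⟨s, hsK, hcov⟩ := hK.elim_nhds_subcover (fun x => ball x (rx x / 2))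
    (fun x _ => ball_mem_nhds x (half_pos (hrx x)))
  rcases K.eq_empty_or_nonempty with hKe | hKne
  · exact ⟨1, by simp [hKe]⟩
  have hsne : s.Nonempty := by
    by_contra h
    rw [Finset.not_nonempty_iff_eq_empty] at h
    obtain ⟨x, hx⟩ := hKne
    have := hcov hx
    simp [h] at this
  set δ : ℝ := s.inf' hsne (fun x => rx x / 2) with hδ
  have hδpos : 0 < δ := by
    rw [hδ, Finset.lt_inf'_iff]
    exact fun x _ => half_pos (hrx x)
  obtain ⟨C, hC⟩ := Metric.isBounded_iff.1 (hK.image hcont).isBounded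
  have hC0 : 0 ≤ C := by
    obtain ⟨x, hx⟩ := hKne
    have := hC (mem_image_of_mem f hx) (mem_image_of_mem f hx)
    simpa using this
  set Lm : NNReal := s.sup Lx
  refine ⟨max Lm (C / δ).toNNReal, LipschitzOnWith.of_dist_le_mul fun u hu v hv => ?_⟩
  rcases le_or_gt (dist u v) δ with hle | hlt
  · obtain ⟨x, hxs, hux⟩ := Set.mem_iUnion₂.1 (hcov hu)
    have hδx : δ ≤ rx x / 2 := Finset.inf'_le _ hxs
    have hu' : u ∈ ball x (rx x) := by
      rw [mem_ball] at hux ⊢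
      linarith [hrx x]
    have hv' : v ∈ ball x (rx x) := by
      rw [mem_ball] at hux ⊢
      have := dist_triangle v u x
      rw [dist_comm v u] at this
      linarith
    have := (hlip x).mono (hball x)
    have hd := this.dist_le_mul u hu' v hv'
    calc dist (f u) (f v) ≤ (Lx x : ℝ) * dist u v := hd
      _ ≤ (max Lm (C / δ).toNNReal : ℝ) * dist u v := by
          apply mul_le_mul_of_nonneg_right _ dist_nonneg
          have h1 : Lx x ≤ Lm := Finset.le_sup hxs
          exact_mod_cast le_trans h1 (le_max_left _ _)
  · have h1 : dist (f u) (f v) ≤ C := hC (mem_image_of_mem f hu) (mem_image_of_mem f hv)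
    have h2 : C ≤ (C / δ) * dist u v := by
      rw [div_mul_eq_mul_div, le_div_iff₀ hδpos]
      nlinarith
    have h3 : ((C / δ).toNNReal : ℝ) = C / δ := Real.coe_toNNReal _ (by positivity)
    calc dist (f u) (f v) ≤ (C / δ) * dist u v := le_trans h1 h2
      _ ≤ (max Lm (C / δ).toNNReal : ℝ) * dist u v := by
          apply mul_le_mul_of_nonneg_right _ dist_nonneg
          have h4 : ((C / δ).toNNReal : ℝ) ≤ ((Lm ⊔ (C / δ).toNNReal : NNReal) : ℝ) :=
            by exact_mod_cast le_max_right Lm (C / δ).toNNReal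
          rw [h3] at h4
          exact h4


lemma row_measure_le (a : ℕ) (w : Fin a → ℝ) (c η M : ℝ) (hc : 0 < c) (hη : 0 ≤ η)
    (hM : 0 ≤ M) (j₀ : Fin a) (hj₀ : c ≤ |w j₀|) :
    volume {x : Fin a → ℝ | (∀ l, |x l| ≤ M) ∧ |∑ l, x l * w l| ≤ η} ≤
      ENNReal.ofReal ((2 * M) ^ (a - 1) * (2 * η / c)) := by
  classical
  set A : Matrix (Fin a) (Fin a) ℝ := (1 : Matrix (Fin a) (Fin a) ℝ).updateRow j₀ w with hA
  have hdet : A.det = w j₀ := by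
    rw [hA, ← Matrix.cramer_transpose_apply, Matrix.transpose_one, Matrix.cramer_one]
    rfl
  have hwj : w j₀ ≠ 0 := by
    intro h
    rw [h] at hj₀
    simp at hj₀
    linarith
  set T := Matrix.toLin' A with hT
  have hTdet : LinearMap.det T = w j₀ := by rw [hT, LinearMap.det_toLin']; exact hdet
  set Box : Set (Fin a → ℝ) :=
    univ.pi (fun l => if l = j₀ then Icc (-η) η else Icc (-M) M) with hBox
  have hsub : {x : Fin a → ℝ | (∀ l, |x l| ≤ M) ∧ |∑ l, x l * w l| ≤ η} ⊆ T ⁻¹' Box := by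
    intro x hx
    simp only [mem_preimage, hBox, mem_pi, mem_univ, forall_true_left]
    intro l
    have hTx : T x l = A.mulVec x l := by rw [hT]; rfl
    by_cases hl : l = j₀
    · subst hl
      rw [if_pos rfl, mem_Icc, ← abs_le]
      rw [hTx]
      have : A.mulVec x l = ∑ m, w m * x m := by
        simp [Matrix.mulVec, dotProduct, hA, Matrix.updateRow_self]
      rw [this]
      have : ∑ m, w m * x m = ∑ m, x m * w m := by
        apply Finset.sum_congr rfl; intro m _; ring
      rw [this]
      exact hx.2
    · rw [if_neg hl, mem_Icc, ← abs_le]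
      rw [hTx]
      have : A.mulVec x l = x l := by
        simp [Matrix.mulVec, dotProduct, hA, Matrix.updateRow_ne hl,
          Matrix.one_apply, ite_mul, Finset.sum_ite_eq]
      rw [this]
      exact hx.1 l
  have hvol : volume (T ⁻¹' Box) = ENNReal.ofReal |(w j₀)⁻¹| * volume Box := by
    rw [Measure.addHaar_preimage_linearMap volume (by rw [hTdet]; exact hwj), hTdet]
  have hvBox : volume Box = ENNReal.ofReal (2 * η) * ENNReal.ofReal (2 * M) ^ (a - 1) := by
    rw [hBox, volume_pi_pi]
    rw [← Finset.mul_prod_erase Finset.univ _ (Finset.mem_univ j₀)]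
    rw [if_pos rfl, Real.volume_Icc]
    congr 1
    · congr 1; ring
    · rw [Finset.prod_congr rfl (g := fun _ => ENNReal.ofReal (2 * M))
        (fun l hl => by
          rw [if_neg (Finset.ne_of_mem_erase hl), Real.volume_Icc]
          congr 1; ring)]
      rw [Finset.prod_const, Finset.card_erase_of_mem (Finset.mem_univ j₀)]
      simp
  calc volume {x : Fin a → ℝ | (∀ l, |x l| ≤ M) ∧ |∑ l, x l * w l| ≤ η}
      ≤ volume (T ⁻¹' Box) := measure_mono hsub
    _ = ENNReal.ofReal |(w j₀)⁻¹| * (ENNReal.ofReal (2 * η) * ENNReal.ofReal (2 * M) ^ (a - 1)) := by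
        rw [hvol, hvBox]
    _ ≤ ENNReal.ofReal ((2 * M) ^ (a - 1) * (2 * η / c)) := by
        rw [← ENNReal.ofReal_pow (by linarith : (0:ℝ) ≤ 2 * M),
          ← ENNReal.ofReal_mul (by linarith : (0:ℝ) ≤ 2 * η),
          ← ENNReal.ofReal_mul (abs_nonneg _)]
        apply ENNReal.ofReal_le_ofReal
        have h1 : |(w j₀)⁻¹| ≤ c⁻¹ := by
          rw [abs_inv]
          exact inv_anti₀ hc hj₀
        calc |(w j₀)⁻¹| * (2 * η * (2 * M) ^ (a - 1))
            ≤ c⁻¹ * (2 * η * (2 * M) ^ (a - 1)) := by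
              apply mul_le_mul_of_nonneg_right h1 (by positivity)
          _ = (2 * M) ^ (a - 1) * (2 * η / c) := by
              field_simp
  
lemma matrix_measure_le (a b : ℕ) (w : Fin a → ℝ) (c η M : ℝ) (hc : 0 < c) (hη : 0 ≤ η)
    (hM : 0 ≤ M) (hw : c ≤ ‖w‖) :
    volume {β : Fin b → Fin a → ℝ | (∀ i l, |β i l| ≤ M) ∧ ‖(Matrix.of β).mulVec w‖ ≤ η} ≤
      (ENNReal.ofReal ((2 * M) ^ (a - 1) * (2 * η / c))) ^ b := by
  obtain ⟨j₀, hj₀⟩ : ∃ j₀, c ≤ |w j₀| := by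
    by_contra h
    push_neg at h
    have : ‖w‖ < c := by
      rw [pi_norm_lt_iff hc]
      intro i
      rw [Real.norm_eq_abs]
      exact h i
    linarith
  have hsub : {β : Fin b → Fin a → ℝ | (∀ i l, |β i l| ≤ M) ∧ ‖(Matrix.of β).mulVec w‖ ≤ η} ⊆
      univ.pi (fun _ : Fin b => {x : Fin a → ℝ | (∀ l, |x l| ≤ M) ∧ |∑ l, x l * w l| ≤ η}) := by
    intro β hβ
    simp only [mem_pi, mem_univ, forall_true_left, mem_setOf_eq]
    intro i
    refine ⟨hβ.1 i, ?_⟩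
    have h2 := hβ.2
    rw [pi_norm_le_iff_of_nonneg hη] at h2
    have := h2 i
    rw [Real.norm_eq_abs] at this
    have heq : (Matrix.of β).mulVec w i = ∑ l, β i l * w l := by
      simp [Matrix.mulVec, dotProduct]
    rwa [heq] at this
  calc volume {β : Fin b → Fin a → ℝ | (∀ i l, |β i l| ≤ M) ∧ ‖(Matrix.of β).mulVec w‖ ≤ η}
      ≤ volume (univ.pi (fun _ : Fin b =>
          {x : Fin a → ℝ | (∀ l, |x l| ≤ M) ∧ |∑ l, x l * w l| ≤ η})) := measure_mono hsub
    _ = ∏ _i : Fin b, volume {x : Fin a → ℝ | (∀ l, |x l| ≤ M) ∧ |∑ l, x l * w l| ≤ η} :=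
        volume_pi_pi _
    _ ≤ ∏ _i : Fin b, ENNReal.ofReal ((2 * M) ^ (a - 1) * (2 * η / c)) :=
        Finset.prod_le_prod' fun i _ => row_measure_le a w c η M hc hη hM j₀ hj₀
    _ = (ENNReal.ofReal ((2 * M) ^ (a - 1) * (2 * η / c))) ^ b := by
        rw [Finset.prod_const]
        simp


lemma mulVec_norm_le (a b : ℕ) (β : Fin b → Fin a → ℝ) (M : ℝ) (hM : 0 ≤ M)
    (hβ : ∀ i l, |β i l| ≤ M) (v : Fin a → ℝ) :
    ‖(Matrix.of β).mulVec v‖ ≤ a * M * ‖v‖ := by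
  rw [pi_norm_le_iff_of_nonneg (by positivity)]
  intro i
  have heq : (Matrix.of β).mulVec v i = ∑ l, β i l * v l := by
    simp [Matrix.mulVec, dotProduct]
  rw [Real.norm_eq_abs, heq]
  calc |∑ l, β i l * v l| ≤ ∑ l, |β i l * v l| := Finset.abs_sum_le_sum_abs _ _
    _ ≤ ∑ _l : Fin a, M * ‖v‖ := by
        apply Finset.sum_le_sum
        intro l _
        rw [abs_mul]
        apply mul_le_mul (hβ i l) _ (abs_nonneg _) hM
        rw [← Real.norm_eq_abs]
        exact norm_le_pi_norm v l
    _ = a * M * ‖v‖ := by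
        rw [Finset.sum_const, Finset.card_univ, Fintype.card_fin, nsmul_eq_mul]
        ring

lemma ennreal_eq_zero_of_le_div (x C : ℝ≥0∞) (hC : C ≠ ⊤) (N₀ : ℕ)
    (h : ∀ N : ℕ, N₀ ≤ N → x ≤ C / N) : x = 0 := by
  by_contra hx
  have hxfin : x ≠ ⊤ := by
    intro htop
    have hh := h (max N₀ 1) (le_max_left _ _)
    rw [htop] at hh
    have hfin : C / ((max N₀ 1 : ℕ) : ℝ≥0∞) < ⊤ := by
      apply ENNReal.div_lt_top hC
      simp
    exact (lt_irrefl _ (lt_of_le_of_lt hh hfin)).elim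
  have hfin2 : C / x ≠ ⊤ := (ENNReal.div_lt_top hC hx).ne
  obtain ⟨N, hN⟩ := exists_nat_gt (max ((C / x).toReal) N₀)
  have hN₀ : N₀ ≤ N := by
    have := lt_of_le_of_lt (le_max_right _ _) hN
    exact_mod_cast this.le
  have hNpos : 0 < N := by
    rcases Nat.eq_zero_or_pos N with h0 | h0
    · exfalso
      rw [h0] at hN
      have : (0:ℝ) ≤ max ((C / x).toReal) N₀ := le_max_of_le_left ENNReal.toReal_nonneg
      simp at hN
      linarith
    · exact h0
  have hlt : C / x < N := by
    rw [← ENNReal.ofReal_toReal hfin2]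
    have h1 : (C / x).toReal < N := lt_of_le_of_lt (le_max_left _ _) hN
    calc ENNReal.ofReal ((C / x).toReal) < ENNReal.ofReal N :=
          (ENNReal.ofReal_lt_ofReal_iff (by positivity)).2 h1
      _ = (N : ℝ≥0∞) := ENNReal.ofReal_natCast N
  have hC2 : C < N * x := by
    rwa [ENNReal.div_lt_iff (Or.inl hx) (Or.inl hxfin)] at hlt
  have hfinal : C / N < x := by
    rw [ENNReal.div_lt_iff (Or.inl (by exact_mod_cast hNpos.ne'))
      (Or.inl (ENNReal.natCast_ne_top N))]
    rwa [mul_comm]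
  exact absurd (h N hN₀) (not_le.2 hfinal)

lemma badZ_null (p a b : ℕ) (hb : p < b) (h : (Fin p → ℝ) → (Fin a → ℝ)) (L : NNReal) (R : ℝ)
    (hL : LipschitzOnWith L h (Metric.closedBall 0 R)) (c M : ℝ) (hc : 0 < c) (hM : 0 ≤ M) :
    volume {β : Fin b → Fin a → ℝ | (∀ i l, |β i l| ≤ M) ∧
      ∃ z ∈ Metric.closedBall (0 : Fin p → ℝ) R, c ≤ ‖h z‖ ∧ (Matrix.of β).mulVec (h z) = 0}
      = 0 := by
  rcases lt_or_ge R 0 with hRneg | hR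
  · have : {β : Fin b → Fin a → ℝ | (∀ i l, |β i l| ≤ M) ∧
        ∃ z ∈ Metric.closedBall (0 : Fin p → ℝ) R, c ≤ ‖h z‖ ∧
          (Matrix.of β).mulVec (h z) = 0} = ∅ := by
      rw [eq_empty_iff_forall_notMem]
      rintro β ⟨-, z, hz, -⟩
      rw [Metric.closedBall_eq_empty.2 hRneg] at hz
      exact hz
    rw [this]
    exact measure_empty
  -- main case : 0 ≤ R
  set C0 : ℝ := (2 * M) ^ (a - 1) * (4 * ((a : ℝ) * M * ((L : ℝ) * R)) / c) with hC0
  set Bad := {β : Fin b → Fin a → ℝ | (∀ i l, |β i l| ≤ M) ∧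
      ∃ z ∈ Metric.closedBall (0 : Fin p → ℝ) R, c ≤ ‖h z‖ ∧
        (Matrix.of β).mulVec (h z) = 0} with hBad
  obtain ⟨N₀', hceil⟩ : ∃ nn : ℕ, (2 * (L : ℝ) * R) / c ≤ nn :=
    ⟨⌈(2 * (L : ℝ) * R) / c⌉₊, Nat.le_ceil _⟩
  refine ennreal_eq_zero_of_le_div (volume Bad) ((ENNReal.ofReal C0) ^ b)
    (ENNReal.pow_ne_top ENNReal.ofReal_ne_top) (N₀' + 1) ?_
  intro N hNge
  have hN1 : 1 ≤ N := le_trans (by omega) hNge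
  have hNpos : (0:ℝ) < N := by exact_mod_cast Nat.lt_of_lt_of_le Nat.zero_lt_one hN1
  have hLRN : (L : ℝ) * R / N ≤ c / 2 := by
    have h1 : (2 * (L : ℝ) * R) / c ≤ N := by
      refine hceil.trans ?_
      exact_mod_cast Nat.cast_le.2 (by omega : N₀' ≤ N)
    rw [div_le_iff₀ hc] at h1
    rw [div_le_div_iff₀ hNpos two_pos]
    nlinarith
  set η : ℝ := ((a : ℝ) * M) * ((L : ℝ) * R / N) with hη
  have hη0 : 0 ≤ η :=
    mul_nonneg (mul_nonneg (Nat.cast_nonneg a) hM)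
      (div_nonneg (mul_nonneg L.coe_nonneg hR) (Nat.cast_nonneg N))
  set center : (Fin p → Fin N) → (Fin p → ℝ) :=
    fun q l => (2 * R * ((q l : ℕ) : ℝ) + R) / N - R with hcenter
  have hcenter_mem : ∀ q, center q ∈ Metric.closedBall (0 : Fin p → ℝ) R := by
    intro q
    rw [Metric.mem_closedBall, dist_zero_right, pi_norm_le_iff_of_nonneg hR]
    intro l
    rw [Real.norm_eq_abs, abs_le]
    have h1 : (0:ℝ) ≤ ((q l : ℕ) : ℝ) := Nat.cast_nonneg _
    have h2 : ((q l : ℕ) : ℝ) + 1 ≤ N := by exact_mod_cast (q l).isLt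
    constructor
    · have h3 : 0 ≤ (2 * R * ((q l : ℕ) : ℝ) + R) / N := by positivity
      simp only [hcenter]
      linarith
    · have h3 : (2 * R * ((q l : ℕ) : ℝ) + R) / N ≤ 2 * R := by
        rw [div_le_iff₀ hNpos]
        nlinarith
      simp only [hcenter]
      linarith
  have hcover : ∀ z ∈ Metric.closedBall (0 : Fin p → ℝ) R,
      ∃ q : Fin p → Fin N, dist z (center q) ≤ R / N := by
    intro z hz
    rw [Metric.mem_closedBall, dist_zero_right] at hz
    rcases eq_or_lt_of_le hR with hR0 | hRpos
    · have hz0 : z = 0 := by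
        rw [← norm_le_zero_iff]
        rw [← hR0] at hz
        exact hz
      refine ⟨fun _ => ⟨0, by omega⟩, ?_⟩
      rw [dist_pi_le_iff (by positivity)]
      intro l
      have hcz : center (fun _ => (⟨0, by omega⟩ : Fin N)) l = 0 := by
        simp only [hcenter, Nat.cast_zero]
        rw [← hR0]
        simp
      rw [hz0, hcz]
      simp
      positivity
    · refine ⟨fun l => ⟨min (N - 1) ⌊(z l + R) * N / (2 * R)⌋₊, by omega⟩, ?_⟩
      rw [dist_pi_le_iff (by positivity)]
      intro l
      have hzl : |z l| ≤ R := by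
        rw [← Real.norm_eq_abs]
        exact (norm_le_pi_norm z l).trans hz
      rw [abs_le] at hzl
      set t : ℝ := (z l + R) * N / (2 * R) with ht
      have ht0 : 0 ≤ t := div_nonneg (by nlinarith) (by positivity)
      have htN : t ≤ N := by
        rw [ht, div_le_iff₀ (by positivity)]
        nlinarith
      set q : ℕ := min (N - 1) ⌊t⌋₊ with hq
      have hq_le_t : (q : ℝ) ≤ t := by
        calc (q : ℝ) ≤ (⌊t⌋₊ : ℝ) := by exact_mod_cast Nat.min_le_right _ _
          _ ≤ t := Nat.floor_le ht0
      have ht_le_q1 : t ≤ (q : ℝ) + 1 := by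
        rcases le_or_gt ⌊t⌋₊ (N - 1) with hc1 | hc1
        · have hqe : q = ⌊t⌋₊ := min_eq_right hc1
          rw [hqe]
          exact le_of_lt (Nat.lt_floor_add_one t)
        · have hqe : q = N - 1 := min_eq_left hc1.le
          have hNq : (N : ℝ) - 1 ≤ (q : ℝ) := by
            rw [hqe]
            rw [Nat.cast_sub hN1]
            simp
          linarith
      have hz_eq : z l = 2 * R * t / N - R := by
        rw [ht]
        field_simp
        ring
      have hceq : center (fun l => (⟨min (N - 1) ⌊(z l + R) * N / (2 * R)⌋₊, by omega⟩ : Fin N)) l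
          = (2 * R * (q : ℝ) + R) / N - R := by
        simp only [hcenter, hq, ht]
      rw [Real.dist_eq, hceq, hz_eq]
      have hkey : 2 * R * t / N - R - ((2 * R * (q : ℝ) + R) / N - R)
          = (R / N) * (2 * (t - q) - 1) := by
        field_simp
        ring
      rw [hkey, abs_mul]
      have h5 : |R / N| = R / N := abs_of_nonneg (by positivity)
      have h6 : |2 * (t - (q:ℝ)) - 1| ≤ 1 := by
        rw [abs_le]
        constructor <;> linarith
      rw [h5]
      exact mul_le_of_le_one_right (div_nonneg hR hNpos.le) h6
  -- the covering estimate
  set Qgood : Finset (Fin p → Fin N) :=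
    Finset.univ.filter (fun q => c / 2 ≤ ‖h (center q)‖) with hQ
  have hsub : Bad ⊆ ⋃ q ∈ Qgood, {β : Fin b → Fin a → ℝ | (∀ i l, |β i l| ≤ M) ∧
      ‖(Matrix.of β).mulVec (h (center q))‖ ≤ η} := by
    rintro β ⟨hβM, z, hzball, hzc, hzker⟩
    obtain ⟨q, hqd⟩ := hcover z hzball
    have hdist : ‖h (center q) - h z‖ ≤ (L : ℝ) * (R / N) := by
      have h1 := hL.dist_le_mul (center q) (hcenter_mem q) z hzball
      rw [dist_eq_norm] at h1
      refine h1.trans ?_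
      have h2 : dist (center q) z ≤ R / N := by rw [dist_comm]; exact hqd
      exact mul_le_mul_of_nonneg_left h2 L.coe_nonneg
    have hLRN' : (L : ℝ) * (R / N) ≤ c / 2 := by
      rw [← mul_div_assoc]
      exact hLRN
    have hcgood : c / 2 ≤ ‖h (center q)‖ := by
      have h1 : ‖h z‖ - ‖h (center q)‖ ≤ ‖h (center q) - h z‖ := by
        rw [norm_sub_rev]
        exact norm_sub_norm_le _ _
      linarith
    refine mem_iUnion₂.2 ⟨q, Finset.mem_filter.2 ⟨Finset.mem_univ _, hcgood⟩, hβM, ?_⟩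
    have heq2 : (Matrix.of β).mulVec (h (center q)) =
        (Matrix.of β).mulVec (h (center q) - h z) := by
      rw [Matrix.mulVec_sub, hzker, sub_zero]
    rw [heq2]
    refine (mulVec_norm_le a b β M hM hβM _).trans ?_
    have h3 : (0:ℝ) ≤ (a : ℝ) * M := mul_nonneg (Nat.cast_nonneg a) hM
    calc (a : ℝ) * M * ‖h (center q) - h z‖ ≤ (a : ℝ) * M * ((L : ℝ) * (R / N)) :=
          mul_le_mul_of_nonneg_left hdist h3
      _ = η := by rw [hη, mul_div_assoc]
  have hbound : volume Bad ≤
      (N : ℝ≥0∞) ^ p * (ENNReal.ofReal ((2 * M) ^ (a - 1) * (2 * η / (c / 2)))) ^ b := by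
    calc volume Bad ≤ volume (⋃ q ∈ Qgood, {β : Fin b → Fin a → ℝ |
          (∀ i l, |β i l| ≤ M) ∧ ‖(Matrix.of β).mulVec (h (center q))‖ ≤ η}) :=
        measure_mono hsub
      _ ≤ ∑ q ∈ Qgood, volume {β : Fin b → Fin a → ℝ |
          (∀ i l, |β i l| ≤ M) ∧ ‖(Matrix.of β).mulVec (h (center q))‖ ≤ η} :=
        measure_biUnion_finset_le _ _
      _ ≤ ∑ _q ∈ Qgood, (ENNReal.ofReal ((2 * M) ^ (a - 1) * (2 * η / (c / 2)))) ^ b := by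
          apply Finset.sum_le_sum
          intro q hq
          exact matrix_measure_le a b (h (center q)) (c / 2) η M (half_pos hc) hη0 hM
            (Finset.mem_filter.1 hq).2
      _ = Qgood.card • (ENNReal.ofReal ((2 * M) ^ (a - 1) * (2 * η / (c / 2)))) ^ b :=
          Finset.sum_const _
      _ ≤ (N : ℝ≥0∞) ^ p * (ENNReal.ofReal ((2 * M) ^ (a - 1) * (2 * η / (c / 2)))) ^ b := by
          rw [nsmul_eq_mul]
          apply mul_le_mul_of_nonneg_right _ zero_le
          have hcard : Qgood.card ≤ N ^ p := by
            calc Qgood.card ≤ (Finset.univ : Finset (Fin p → Fin N)).card :=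
                Finset.card_le_card (Finset.filter_subset _ _)
              _ = N ^ p := by
                  rw [Finset.card_univ, Fintype.card_fun]
                  simp
          calc (Qgood.card : ℝ≥0∞) ≤ ((N ^ p : ℕ) : ℝ≥0∞) := by exact_mod_cast hcard
            _ = (N : ℝ≥0∞) ^ p := by push_cast; rfl
  have hCeq : (2 * M) ^ (a - 1) * (2 * η / (c / 2)) = C0 / N := by
    rw [hη, hC0]
    field_simp
    ring
  rw [hCeq] at hbound
  have hofdiv : ENNReal.ofReal (C0 / N) = ENNReal.ofReal C0 / (N : ℝ≥0∞) := by
    rw [ENNReal.ofReal_div_of_pos hNpos, ENNReal.ofReal_natCast]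
  rw [hofdiv] at hbound
  refine hbound.trans ?_
  -- (N)^p * (C/N)^b ≤ C^b / N
  set C : ℝ≥0∞ := ENNReal.ofReal C0 with hC
  have hNne : (N : ℝ≥0∞) ≠ 0 := by exact_mod_cast (by omega : N ≠ 0)
  have hNtop : (N : ℝ≥0∞) ≠ ⊤ := ENNReal.natCast_ne_top N
  have hNpne : (N : ℝ≥0∞) ^ p ≠ 0 := pow_ne_zero _ hNne
  have hNptop : (N : ℝ≥0∞) ^ p ≠ ⊤ := ENNReal.pow_ne_top hNtop
  have hpowle : (N : ℝ≥0∞) ^ p * ((N : ℝ≥0∞) ^ b)⁻¹ ≤ ((N : ℝ≥0∞))⁻¹ := by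
    have h1 : (N : ℝ≥0∞) ^ p * (N : ℝ≥0∞) ≤ (N : ℝ≥0∞) ^ b := by
      rw [← pow_succ]
      exact pow_le_pow_right₀ (by exact_mod_cast hN1) (by omega)
    have h2 : ((N : ℝ≥0∞) ^ b)⁻¹ ≤ ((N : ℝ≥0∞) ^ p * (N : ℝ≥0∞))⁻¹ :=
      ENNReal.inv_le_inv.2 h1
    calc (N : ℝ≥0∞) ^ p * ((N : ℝ≥0∞) ^ b)⁻¹
        ≤ (N : ℝ≥0∞) ^ p * ((N : ℝ≥0∞) ^ p * (N : ℝ≥0∞))⁻¹ :=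
          mul_le_mul_of_nonneg_left h2 zero_le
      _ = (N : ℝ≥0∞) ^ p * (((N : ℝ≥0∞) ^ p)⁻¹ * ((N : ℝ≥0∞))⁻¹) := by
          rw [ENNReal.mul_inv (Or.inl hNpne) (Or.inl hNptop)]
      _ = ((N : ℝ≥0∞) ^ p * ((N : ℝ≥0∞) ^ p)⁻¹) * ((N : ℝ≥0∞))⁻¹ := by ring
      _ = ((N : ℝ≥0∞))⁻¹ := by
          rw [ENNReal.mul_inv_cancel hNpne hNptop, one_mul]
  calc (N : ℝ≥0∞) ^ p * (C / (N : ℝ≥0∞)) ^ b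
      = (N : ℝ≥0∞) ^ p * (C ^ b * (((N : ℝ≥0∞)) ^ b)⁻¹) := by
        rw [div_eq_mul_inv, mul_pow, ENNReal.inv_pow]
    _ = C ^ b * ((N : ℝ≥0∞) ^ p * (((N : ℝ≥0∞)) ^ b)⁻¹) := by ring
    _ ≤ C ^ b * ((N : ℝ≥0∞))⁻¹ := mul_le_mul_of_nonneg_left hpowle zero_le
    _ = C ^ b / N := by rw [div_eq_mul_inv]



noncomputable def extB {k : ℕ} {d : ℕ → ℕ}
    (p : ∀ j : Fin k, Fin (d (2 * (j : ℕ) + 2)) → Fin (d (2 * (j : ℕ) + 1)) → ℝ) :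
    ∀ j : ℕ, Fin (d (2 * j + 2)) → Fin (d (2 * j + 1)) → ℝ :=
  fun j => if h : j < k then p ⟨j, h⟩ else 0

lemma extB_lt {k : ℕ} {d : ℕ → ℕ}
    (p : ∀ j : Fin k, Fin (d (2 * (j : ℕ) + 2)) → Fin (d (2 * (j : ℕ) + 1)) → ℝ)
    {j : ℕ} (h : j < k) : extB p j = p ⟨j, h⟩ := dif_pos h

lemma comp_congr (d : ℕ → ℕ)
    (f : ∀ j : ℕ, (Fin (d (2 * j)) → ℝ) → (Fin (d (2 * j + 1)) → ℝ))
    (B B' : ∀ j : ℕ, Fin (d (2 * j + 2)) → Fin (d (2 * j + 1)) → ℝ)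
    (k : ℕ) (h : ∀ j, j < k → B j = B' j) (x : Fin (d 0) → ℝ) :
    comp d f B k x = comp d f B' k x := by
  induction k with
  | zero => rfl
  | succ k ih =>
    simp only [comp]
    rw [h k (by omega), ih (fun j hj => h j (by omega))]

lemma locallyLipschitz_mulVec {q r : ℕ} (A : Matrix (Fin q) (Fin r) ℝ) :
    LocallyLipschitz (fun v : Fin r → ℝ => A.mulVec v) := by
  have h := (LinearMap.toContinuousLinearMap (Matrix.mulVecLin A)).lipschitz
  have he : ⇑(LinearMap.toContinuousLinearMap (Matrix.mulVecLin A)) =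
      fun v : Fin r → ℝ => A.mulVec v := by
    funext v
    rw [LinearMap.coe_toContinuousLinearMap']
    exact Matrix.mulVecLin_apply A v
  rw [he] at h
  exact h.locallyLipschitz

lemma comp_locallyLipschitz (d : ℕ → ℕ)
    (f : ∀ j : ℕ, (Fin (d (2 * j)) → ℝ) → (Fin (d (2 * j + 1)) → ℝ))
    (hflip : ∀ j, LocallyLipschitz (f j))
    (B : ∀ j : ℕ, Fin (d (2 * j + 2)) → Fin (d (2 * j + 1)) → ℝ) (k : ℕ) :
    LocallyLipschitz (fun x : Fin (d 0) → ℝ => comp d f B k x) := by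
  induction k with
  | zero => exact LocallyLipschitz.id
  | succ k ih =>
    have : (fun x : Fin (d 0) → ℝ => comp d f B (k + 1) x) =
        (fun v : Fin (d (2 * k + 1)) → ℝ => (Matrix.of (B k)).mulVec v) ∘
          (f k) ∘ (fun x => comp d f B k x) := by
      funext x
      simp only [comp, Function.comp_apply]
    rw [this]
    exact (locallyLipschitz_mulVec _).comp ((hflip k).comp ih)

lemma exists_min_fail (d : ℕ → ℕ)
    (f : ∀ j : ℕ, (Fin (d (2 * j)) → ℝ) → (Fin (d (2 * j + 1)) → ℝ))
    (B : ∀ j : ℕ, Fin (d (2 * j + 2)) → Fin (d (2 * j + 1)) → ℝ) (k : ℕ)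
    (hnot : ¬ Function.Injective (fun x : Fin (d 0) → ℝ => comp d f B k x)) :
    ∃ j, j < k ∧ Function.Injective (fun x : Fin (d 0) → ℝ => comp d f B j x) ∧
      ¬ Function.Injective (fun x : Fin (d 0) → ℝ => comp d f B (j + 1) x) := by
  induction k with
  | zero => exact absurd (fun a b hab => hab) hnot
  | succ k ih =>
    by_cases hI : Function.Injective (fun x : Fin (d 0) → ℝ => comp d f B k x)
    · exact ⟨k, by omega, hI, hnot⟩
    · obtain ⟨j, hj, h1, h2⟩ := ih hI
      exact ⟨j, by omega, h1, h2⟩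

noncomputable def wvec (d : ℕ → ℕ)
    (f : ∀ j : ℕ, (Fin (d (2 * j)) → ℝ) → (Fin (d (2 * j + 1)) → ℝ)) {k : ℕ}
    (p : ∀ j : Fin k, Fin (d (2 * (j : ℕ) + 2)) → Fin (d (2 * (j : ℕ) + 1)) → ℝ)
    (j : Fin k) (x y : Fin (d 0) → ℝ) : Fin (d (2 * (j : ℕ) + 1)) → ℝ :=
  f (j : ℕ) (comp d f (extB p) (j : ℕ) x) - f (j : ℕ) (comp d f (extB p) (j : ℕ) y)

def badS (d : ℕ → ℕ)
    (f : ∀ j : ℕ, (Fin (d (2 * j)) → ℝ) → (Fin (d (2 * j + 1)) → ℝ)) {k : ℕ}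
    (j : Fin k) (R r M : ℕ) :
    Set (∀ j : Fin k, Fin (d (2 * (j : ℕ) + 2)) → Fin (d (2 * (j : ℕ) + 1)) → ℝ) :=
  {p | ∃ x ∈ Metric.closedBall (0 : Fin (d 0) → ℝ) (R : ℝ),
    ∃ y ∈ Metric.closedBall (0 : Fin (d 0) → ℝ) (R : ℝ),
      (1 : ℝ) / (r + 1) ≤ ‖wvec d f p j x y‖ ∧
      (Matrix.of (p j)).mulVec (wvec d f p j x y) = 0 ∧
      ∀ i l, |p j i l| ≤ (M : ℝ)}

lemma bad_subset (d : ℕ → ℕ)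
    (f : ∀ j : ℕ, (Fin (d (2 * j)) → ℝ) → (Fin (d (2 * j + 1)) → ℝ))
    (hfinj : ∀ j, Function.Injective (f j)) (k : ℕ) :
    {p : ∀ j : Fin k, Fin (d (2 * (j : ℕ) + 2)) → Fin (d (2 * (j : ℕ) + 1)) → ℝ |
        ¬ Function.Injective (fun x : Fin (d 0) → ℝ => comp d f (extB p) k x)} ⊆
      ⋃ (j : Fin k) (R : ℕ) (r : ℕ) (M : ℕ), badS d f j R r M := by
  intro p hp
  obtain ⟨j, hjk, hInj, hNot⟩ := exists_min_fail d f (extB p) k hp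
  obtain ⟨x, y, hxy, hne⟩ := Function.not_injective_iff.1 hNot
  have hgne : f j (comp d f (extB p) j x) ≠ f j (comp d f (extB p) j y) := by
    intro hcon
    exact hne (hInj (hfinj j hcon))
  have hw0 : wvec d f p ⟨j, hjk⟩ x y ≠ 0 := sub_ne_zero.2 hgne
  have hwpos : 0 < ‖wvec d f p ⟨j, hjk⟩ x y‖ := norm_pos_iff.2 hw0
  have hker : (Matrix.of (p ⟨j, hjk⟩)).mulVec (wvec d f p ⟨j, hjk⟩ x y) = 0 := by
    have h1 : comp d f (extB p) (j + 1) x = comp d f (extB p) (j + 1) y := hxy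
    simp only [comp] at h1
    rw [wvec, Matrix.mulVec_sub, ← extB_lt p hjk, h1, sub_self]
  obtain ⟨r, hr⟩ := exists_nat_gt (1 / ‖wvec d f p ⟨j, hjk⟩ x y‖)
  have hrle : (1 : ℝ) / (r + 1) ≤ ‖wvec d f p ⟨j, hjk⟩ x y‖ := by
    rw [div_lt_iff₀ hwpos] at hr
    rw [div_le_iff₀ (by positivity)]
    nlinarith
  set R : ℕ := ⌈max ‖x‖ ‖y‖⌉₊ with hR
  set M : ℕ := ⌈‖p ⟨j, hjk⟩‖⌉₊ with hM
  refine mem_iUnion.2 ⟨⟨j, hjk⟩, mem_iUnion.2 ⟨R, mem_iUnion.2 ⟨r, mem_iUnion.2 ⟨M, ?_⟩⟩⟩⟩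
  refine ⟨x, ?_, y, ?_, hrle, hker, ?_⟩
  · rw [Metric.mem_closedBall, dist_zero_right]
    exact le_trans (le_max_left _ _) (Nat.le_ceil _)
  · rw [Metric.mem_closedBall, dist_zero_right]
    exact le_trans (le_max_right _ _) (Nat.le_ceil _)
  · intro i l
    calc |p ⟨j, hjk⟩ i l| = ‖p ⟨j, hjk⟩ i l‖ := (Real.norm_eq_abs _).symm
      _ ≤ ‖p ⟨j, hjk⟩ i‖ := norm_le_pi_norm _ l
      _ ≤ ‖p ⟨j, hjk⟩‖ := norm_le_pi_norm _ i
      _ ≤ (M : ℝ) := Nat.le_ceil _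


lemma continuous_mulVec_pair {q r : ℕ} :
    Continuous (fun x : (Matrix (Fin q) (Fin r) ℝ) × (Fin r → ℝ) => x.1.mulVec x.2) := by
  apply continuous_pi
  intro i
  have heq : (fun x : (Matrix (Fin q) (Fin r) ℝ) × (Fin r → ℝ) => x.1.mulVec x.2 i) =
      fun x : (Matrix (Fin q) (Fin r) ℝ) × (Fin r → ℝ) => ∑ l, x.1 i l * x.2 l := by
    funext x
    simp [Matrix.mulVec, dotProduct]
  rw [heq]
  apply continuous_finset_sum
  intro l _
  exact (((continuous_apply l).comp ((continuous_apply i).comp continuous_fst)).mul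
    ((continuous_apply l).comp continuous_snd))

lemma extB_continuous {k : ℕ} {d : ℕ → ℕ} (j : ℕ) :
    Continuous (fun p : (∀ j : Fin k, Fin (d (2 * (j : ℕ) + 2)) → Fin (d (2 * (j : ℕ) + 1)) → ℝ)
      => extB p j) := by
  by_cases h : j < k
  · have : (fun p : (∀ j : Fin k, Fin (d (2 * (j : ℕ) + 2)) → Fin (d (2 * (j : ℕ) + 1)) → ℝ)
        => extB p j) = fun p => p ⟨j, h⟩ := by
      funext p
      exact extB_lt p h
    rw [this]
    exact continuous_apply _
  · have : (fun p : (∀ j : Fin k, Fin (d (2 * (j : ℕ) + 2)) → Fin (d (2 * (j : ℕ) + 1)) → ℝ)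
        => extB p j) = fun _ => 0 := by
      funext p
      exact dif_neg h
    rw [this]
    exact continuous_const

lemma comp_pair_continuous (d : ℕ → ℕ)
    (f : ∀ j : ℕ, (Fin (d (2 * j)) → ℝ) → (Fin (d (2 * j + 1)) → ℝ))
    (hfc : ∀ j, Continuous (f j)) {k : ℕ} (jj : ℕ) {E : Type*} [TopologicalSpace E]
    (g : E → (∀ j : Fin k, Fin (d (2 * (j : ℕ) + 2)) → Fin (d (2 * (j : ℕ) + 1)) → ℝ))
    (hg : Continuous g)
    (u : E → (Fin (d 0) → ℝ)) (hu : Continuous u) :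
    Continuous (fun e : E => comp d f (extB (g e)) jj (u e)) := by
  induction jj with
  | zero => exact hu
  | succ jj ih =>
    have heq : (fun e : E => comp d f (extB (g e)) (jj + 1) (u e)) =
        fun e : E => (Matrix.of (extB (g e) jj)).mulVec (f jj (comp d f (extB (g e)) jj (u e))) := by
      funext e
      simp only [comp]
    rw [heq]
    exact continuous_mulVec_pair.comp
      (((extB_continuous jj).comp hg).prodMk ((hfc jj).comp ih))

lemma badS_measurable (d : ℕ → ℕ)
    (f : ∀ j : ℕ, (Fin (d (2 * j)) → ℝ) → (Fin (d (2 * j + 1)) → ℝ))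
    (hfc : ∀ j, Continuous (f j)) {k : ℕ} (j : Fin k) (R r M : ℕ) :
    MeasurableSet (badS d f j R r M) := by
  set P := ∀ j : Fin k, Fin (d (2 * (j : ℕ) + 2)) → Fin (d (2 * (j : ℕ) + 1)) → ℝ
  set X := Fin (d 0) → ℝ
  have hwc : Continuous (fun q : P × X × X => wvec d f q.1 j q.2.1 q.2.2) := by
    have h1 := comp_pair_continuous d f hfc (k := k) (j : ℕ) (fun q : P × X × X => q.1)
      continuous_fst (fun q => q.2.1) (continuous_fst.comp continuous_snd)
    have h2 := comp_pair_continuous d f hfc (k := k) (j : ℕ) (fun q : P × X × X => q.1)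
      continuous_fst (fun q => q.2.2) (continuous_snd.comp continuous_snd)
    exact ((hfc (j : ℕ)).comp h1).sub ((hfc (j : ℕ)).comp h2)
  set T : Set (P × X × X) := {q | (1 : ℝ) / (r + 1) ≤ ‖wvec d f q.1 j q.2.1 q.2.2‖ ∧
      (Matrix.of (q.1 j)).mulVec (wvec d f q.1 j q.2.1 q.2.2) = 0 ∧
      ∀ i l, |q.1 j i l| ≤ (M : ℝ)} with hT
  have hTclosed : IsClosed T := by
    apply IsClosed.inter
    · exact isClosed_le continuous_const (continuous_norm.comp hwc)
    apply IsClosed.inter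
    · apply isClosed_eq _ continuous_const
      exact continuous_mulVec_pair.comp
        (((continuous_apply j).comp continuous_fst).prodMk hwc)
    · have hcl : IsClosed (⋂ (i) (l), {q : P × X × X | |q.1 j i l| ≤ (M : ℝ)}) := by
        apply isClosed_iInter
        intro i
        apply isClosed_iInter
        intro l
        apply isClosed_le _ continuous_const
        exact continuous_abs.comp
          ((continuous_apply l).comp ((continuous_apply i).comp
            ((continuous_apply j).comp continuous_fst)))
      have hset : (⋂ (i) (l), {q : P × X × X | |q.1 j i l| ≤ (M : ℝ)}) =
          {q : P × X × X | ∀ i l, |q.1 j i l| ≤ (M : ℝ)} := by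
        ext q; simp
      show IsClosed {q : P × X × X | ∀ i l, |q.1 j i l| ≤ (M : ℝ)}
      rw [← hset]
      exact hcl
  have hrepr : badS d f j R r M = ⋃ (M' : ℕ), Prod.fst ''
      (T ∩ ((Metric.closedBall (0 : P) (M' : ℝ)) ×ˢ
        ((Metric.closedBall (0 : X) (R : ℝ)) ×ˢ (Metric.closedBall (0 : X) (R : ℝ))))) := by
    ext p
    constructor
    · rintro ⟨x, hx, y, hy, h1, h2, h3⟩
      refine mem_iUnion.2 ⟨⌈‖p‖⌉₊, ⟨(p, x, y), ⟨⟨h1, h2, h3⟩, ?_, hx, hy⟩, rfl⟩⟩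
      rw [Metric.mem_closedBall, dist_zero_right]
      exact Nat.le_ceil _
    · intro hp
      obtain ⟨M', ⟨q, ⟨⟨h1, h2, h3⟩, _, hx, hy⟩, rfl⟩⟩ := mem_iUnion.1 hp
      exact ⟨q.2.1, hx, q.2.2, hy, h1, h2, h3⟩
  rw [hrepr]
  apply MeasurableSet.iUnion
  intro M'
  have hcpt : IsCompact (T ∩ ((Metric.closedBall (0 : P) (M' : ℝ)) ×ˢ
      ((Metric.closedBall (0 : X) (R : ℝ)) ×ˢ (Metric.closedBall (0 : X) (R : ℝ))))) := by
    apply IsCompact.inter_left _ hTclosed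
    exact (isCompact_closedBall _ _).prod
      ((isCompact_closedBall _ _).prod (isCompact_closedBall _ _))
  exact ((hcpt.image continuous_fst).isClosed).measurableSet
noncomputable def split1 (n : ℕ) (z : Fin (2 * n) → ℝ) : Fin n → ℝ :=
  fun l => z ⟨l, by have := l.isLt; omega⟩

noncomputable def split2 (n : ℕ) (z : Fin (2 * n) → ℝ) : Fin n → ℝ :=
  fun l => z ⟨n + l, by have := l.isLt; omega⟩

noncomputable def joinv (n : ℕ) (x y : Fin n → ℝ) : Fin (2 * n) → ℝ :=
  fun i => if h : (i : ℕ) < n then x ⟨i, h⟩ else y ⟨(i : ℕ) - n, by have := i.isLt; omega⟩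

lemma lipschitzWith_split1 (n : ℕ) : LipschitzWith 1 (split1 n) := by
  apply LipschitzWith.of_dist_le_mul
  intro z z'
  rw [NNReal.coe_one, one_mul, dist_pi_le_iff dist_nonneg]
  intro l
  exact dist_le_pi_dist z z' _

lemma lipschitzWith_split2 (n : ℕ) : LipschitzWith 1 (split2 n) := by
  apply LipschitzWith.of_dist_le_mul
  intro z z'
  rw [NNReal.coe_one, one_mul, dist_pi_le_iff dist_nonneg]
  intro l
  exact dist_le_pi_dist z z' _

lemma split1_join (n : ℕ) (x y : Fin n → ℝ) : split1 n (joinv n x y) = x := by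
  funext l
  simp only [split1, joinv]
  rw [dif_pos (show ((⟨(l : ℕ), by have := l.isLt; omega⟩ : Fin (2 * n)) : ℕ) < n from l.isLt)]

lemma split2_join (n : ℕ) (x y : Fin n → ℝ) : split2 n (joinv n x y) = y := by
  funext l
  simp only [split2, joinv]
  rw [dif_neg (show ¬ ((⟨n + (l : ℕ), by have := l.isLt; omega⟩ : Fin (2 * n)) : ℕ) < n by
    simp)]
  exact congrArg y (Fin.ext (by simp))

lemma joinv_mem (n : ℕ) (R : ℝ) (hR : 0 ≤ R) (x y : Fin n → ℝ)
    (hx : x ∈ Metric.closedBall 0 R) (hy : y ∈ Metric.closedBall 0 R) :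
    joinv n x y ∈ Metric.closedBall (0 : Fin (2 * n) → ℝ) R := by
  rw [Metric.mem_closedBall, dist_zero_right] at hx hy ⊢
  rw [pi_norm_le_iff_of_nonneg hR]
  intro i
  simp only [joinv]
  split_ifs with h
  · exact le_trans (norm_le_pi_norm x _) hx
  · exact le_trans (norm_le_pi_norm y _) hy

lemma badS_null (d : ℕ → ℕ)
    (f : ∀ j : ℕ, (Fin (d (2 * j)) → ℝ) → (Fin (d (2 * j + 1)) → ℝ))
    (hflip : ∀ j, LocallyLipschitz (f j)) {k' : ℕ} (j : Fin (k' + 1)) (R r M : ℕ)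
    (hdim : 2 * d 0 < d (2 * (j : ℕ) + 2)) :
    volume (badS d f j R r M) = 0 := by
  classical
  set S := badS d f j R r M with hS
  set e := MeasurableEquiv.piFinSuccAbove
    (fun i : Fin (k' + 1) => Fin (d (2 * (i : ℕ) + 2)) → Fin (d (2 * (i : ℕ) + 1)) → ℝ) j with he
  have hmp := MeasureTheory.volume_preserving_piFinSuccAbove
    (fun i : Fin (k' + 1) => Fin (d (2 * (i : ℕ) + 2)) → Fin (d (2 * (i : ℕ) + 1)) → ℝ) j
  have hSm : MeasurableSet S := badS_measurable d f (fun j => (hflip j).continuous) j R r M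
  have himeq : e '' S = e.symm ⁻¹' S := MeasurableEquiv.image_eq_preimage_symm e S
  have him : MeasurableSet (e '' S) := by
    rw [himeq]
    exact e.symm.measurable hSm
  -- fiberwise nullity
  have hfiber : ∀ ρ : (∀ i : Fin k',
      Fin (d (2 * ((j.succAbove i) : ℕ) + 2)) → Fin (d (2 * ((j.succAbove i) : ℕ) + 1)) → ℝ),
      volume {β : Fin (d (2 * (j : ℕ) + 2)) → Fin (d (2 * (j : ℕ) + 1)) → ℝ |
        j.insertNth β ρ ∈ S} = 0 := by
    intro ρ
    set g : (Fin (d 0) → ℝ) → (Fin (d (2 * (j : ℕ))) → ℝ) :=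
      fun x => comp d f (extB (Fin.insertNth (α := fun i : Fin (k' + 1) => Fin (d (2 * (i : ℕ) + 2)) → Fin (d (2 * (i : ℕ) + 1)) → ℝ) j 0 ρ)) (j : ℕ) x with hg
    have hcompind : ∀ (β) (x : Fin (d 0) → ℝ),
        comp d f (extB (j.insertNth β ρ)) (j : ℕ) x = g x := by
      intro β x
      have hgen : ∀ i : Fin (k' + 1), i ≠ j → Fin.insertNth (α := fun i : Fin (k' + 1) => Fin (d (2 * (i : ℕ) + 2)) → Fin (d (2 * (i : ℕ) + 1)) → ℝ) j β ρ i = Fin.insertNth (α := fun i : Fin (k' + 1) => Fin (d (2 * (i : ℕ) + 2)) → Fin (d (2 * (i : ℕ) + 1)) → ℝ) j 0 ρ i := by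
        intro i hne
        obtain ⟨m, hm⟩ := Fin.exists_succAbove_eq hne
        subst hm
        rw [Fin.insertNth_apply_succAbove, Fin.insertNth_apply_succAbove]
      apply comp_congr
      intro i hi
      have hik : i < k' + 1 := by have := j.isLt; omega
      rw [extB_lt _ hik, extB_lt _ hik]
      apply hgen
      intro hcon
      rw [Fin.ext_iff] at hcon
      simp at hcon
      omega
    set hfun : (Fin (2 * d 0) → ℝ) → (Fin (d (2 * (j : ℕ) + 1)) → ℝ) :=
      fun z => f (j : ℕ) (g (split1 (d 0) z)) - f (j : ℕ) (g (split2 (d 0) z)) with hhfun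
    have hl1 : LocallyLipschitz (fun z : Fin (2 * d 0) → ℝ => f (j : ℕ) (g (split1 (d 0) z))) :=
      ((hflip (j : ℕ)).comp (comp_locallyLipschitz d f hflip _ _)).comp
        (lipschitzWith_split1 (d 0)).locallyLipschitz
    have hl2 : LocallyLipschitz (fun z : Fin (2 * d 0) → ℝ => f (j : ℕ) (g (split2 (d 0) z))) :=
      ((hflip (j : ℕ)).comp (comp_locallyLipschitz d f hflip _ _)).comp
        (lipschitzWith_split2 (d 0)).locallyLipschitz
    obtain ⟨L1, hL1⟩ := locLip_lipschitzOnWith_compact hl1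
      (isCompact_closedBall (0 : Fin (2 * d 0) → ℝ) (R : ℝ))
    obtain ⟨L2, hL2⟩ := locLip_lipschitzOnWith_compact hl2
      (isCompact_closedBall (0 : Fin (2 * d 0) → ℝ) (R : ℝ))
    have hLip : LipschitzOnWith (L1 + L2) hfun (Metric.closedBall 0 (R : ℝ)) := by
      apply LipschitzOnWith.of_dist_le_mul
      intro u hu v hv
      have d1 := hL1.dist_le_mul u hu v hv
      have d2 := hL2.dist_le_mul u hu v hv
      calc dist (hfun u) (hfun v)
          ≤ dist (f (j : ℕ) (g (split1 (d 0) u))) (f (j : ℕ) (g (split1 (d 0) v))) +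
            dist (f (j : ℕ) (g (split2 (d 0) u))) (f (j : ℕ) (g (split2 (d 0) v))) :=
            dist_sub_sub_le _ _ _ _
        _ ≤ (L1 : ℝ) * dist u v + (L2 : ℝ) * dist u v := add_le_add d1 d2
        _ = ((L1 + L2 : NNReal) : ℝ) * dist u v := by push_cast; ring
    have hsub : {β : Fin (d (2 * (j : ℕ) + 2)) → Fin (d (2 * (j : ℕ) + 1)) → ℝ |
        j.insertNth β ρ ∈ S} ⊆
        {β : Fin (d (2 * (j : ℕ) + 2)) → Fin (d (2 * (j : ℕ) + 1)) → ℝ |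
          (∀ i l, |β i l| ≤ (M : ℝ)) ∧
          ∃ z ∈ Metric.closedBall (0 : Fin (2 * d 0) → ℝ) (R : ℝ),
            (1 : ℝ) / (r + 1) ≤ ‖hfun z‖ ∧ (Matrix.of β).mulVec (hfun z) = 0} := by
      intro β hβ
      obtain ⟨x, hx, y, hy, hnorm, hker, hMb⟩ := hβ
      have hpj := Fin.insertNth_apply_same (α := fun i : Fin (k' + 1) => Fin (d (2 * (i : ℕ) + 2)) → Fin (d (2 * (i : ℕ) + 1)) → ℝ) j β ρ
      have hwv : wvec d f (j.insertNth β ρ) j x y = hfun (joinv (d 0) x y) := by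
        rw [wvec, hhfun]
        show _ = f (j : ℕ) (g (split1 (d 0) (joinv (d 0) x y))) -
          f (j : ℕ) (g (split2 (d 0) (joinv (d 0) x y)))
        rw [split1_join, split2_join, hcompind, hcompind]
      refine ⟨?_, joinv (d 0) x y,
        joinv_mem (d 0) (R : ℝ) (Nat.cast_nonneg R) x y hx hy, ?_, ?_⟩
      · intro i l
        have := hMb i l
        rwa [hpj] at this
      · rw [← hwv]
        exact hnorm
      · rw [hpj] at hker
        rw [hwv] at hker
        exact hker
    refine measure_mono_null hsub ?_
    exact badZ_null (2 * d 0) (d (2 * (j : ℕ) + 1)) (d (2 * (j : ℕ) + 2)) hdim hfun (L1 + L2)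
      (R : ℝ) hLip ((1 : ℝ) / (r + 1)) (M : ℝ) (by positivity) (Nat.cast_nonneg M)
  -- Fubini
  have hvolS : volume S = (volume.prod volume) (e '' S) := by
    rw [← MeasureTheory.Measure.volume_eq_prod, ← hmp.measure_preimage him.nullMeasurableSet]
    congr 1
    exact (Set.preimage_image_eq S e.injective).symm
  rw [hvolS]
  have hswapmeas : MeasurableSet (Prod.swap ⁻¹' (e '' S)) := measurable_swap him
  have hswap : (volume.prod volume) (e '' S) = (volume.prod volume) (Prod.swap ⁻¹' (e '' S)) := by
    rw [← Measure.prod_swap]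
    rw [Measure.map_apply measurable_swap him]
  rw [hswap]
  rw [Measure.measure_prod_null hswapmeas]
  refine Filter.Eventually.of_forall (fun ρ => ?_)
  have hfibeq : (Prod.mk ρ ⁻¹' (Prod.swap ⁻¹' (⇑e '' S))) =
      {β : Fin (d (2 * (j : ℕ) + 2)) → Fin (d (2 * (j : ℕ) + 1)) → ℝ |
        j.insertNth β ρ ∈ S} := by
    ext β
    simp only [Set.mem_preimage, Prod.swap_prod_mk, Set.mem_setOf_eq]
    rw [himeq]
    simp only [Set.mem_preimage]
    constructor
    · intro hmem
      convert hmem using 2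
      rfl
    · intro hmem
      convert hmem using 2
      rfl
  have hzero : volume (Prod.mk ρ ⁻¹' (Prod.swap ⁻¹' (⇑e '' S))) = 0 := by
    rw [hfibeq]
    exact hfiber ρ
  simpa using hzero


/-- **Injectivity of cascaded networks with random projections**: if each `f_j` is injective
and locally Lipschitz (in particular an injective ReLU network), the dimensions satisfy
`d(2j) ≥ 2n+1` for `1 ≤ j ≤ k` (with `d 0 = n`, `d(2k) = m ≥ 2n+1`), and the random
matrices `(B_0, …, B_{k-1})` have a joint distribution absolutely continuous with respect to
the Lebesgue measure on `∏_j ℝ^{d(2j+2)×d(2j+1)}`, then the composed map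
`F_k : ℝ^n → ℝ^m` is injective almost surely. -/
theorem cascaded_network_injective_almost_surely
    (n m k : ℕ) (hn : 1 ≤ n) (hm : 1 ≤ m) (hk : 1 ≤ k)
    (d : ℕ → ℕ) (hpos : ∀ j, 1 ≤ j → j ≤ 2 * k → 1 ≤ d j)
    (hd0 : d 0 = n) (hdk : d (2 * k) = m) (hm2n : 2 * n + 1 ≤ m)
    (hdeven : ∀ j : ℕ, 1 ≤ j → j ≤ k → 2 * n + 1 ≤ d (2 * j))
    (f : ∀ j : ℕ, (Fin (d (2 * j)) → ℝ) → (Fin (d (2 * j + 1)) → ℝ))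
    (hfinj : ∀ j, Function.Injective (f j))
    (hflip : ∀ j, LocallyLipschitz (f j))
    {Ω : Type*} [MeasureSpace Ω] [IsProbabilityMeasure (ℙ : Measure Ω)]
    (B : Ω → ∀ j : ℕ, Fin (d (2 * j + 2)) → Fin (d (2 * j + 1)) → ℝ)
    (hBmeas : Measurable fun ω => fun j : Fin k => B ω j)
    (hBac : (Measure.map (fun ω => fun j : Fin k => B ω j) ℙ) ≪
      (volume :
        Measure (∀ j : Fin k, Fin (d (2 * (j : ℕ) + 2)) → Fin (d (2 * (j : ℕ) + 1)) → ℝ))) :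
    ∀ᵐ ω ∂(ℙ : Measure Ω), Function.Injective (fun x : Fin (d 0) → ℝ => comp d f (B ω) k x) := by

  obtain ⟨k', rfl⟩ : ∃ k', k = k' + 1 := ⟨k - 1, by omega⟩
  set BadP : Set (∀ j : Fin (k' + 1),
      Fin (d (2 * (j : ℕ) + 2)) → Fin (d (2 * (j : ℕ) + 1)) → ℝ) :=
    {p | ¬ Function.Injective (fun x : Fin (d 0) → ℝ => comp d f (extB p) (k' + 1) x)}
    with hBadP
  have hvol0 : volume BadP = 0 := by
    apply measure_mono_null (bad_subset d f hfinj (k' + 1))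
    apply measure_iUnion_null
    intro j
    apply measure_iUnion_null
    intro R
    apply measure_iUnion_null
    intro r
    apply measure_iUnion_null
    intro M
    apply badS_null d f hflip j R r M
    have h1 : 2 * (j : ℕ) + 2 = 2 * ((j : ℕ) + 1) := by ring
    rw [h1, hd0]
    have h2 := hdeven ((j : ℕ) + 1) (by omega) (by have := j.isLt; omega)
    omega
  have hmap : (Measure.map (fun ω => fun j : Fin (k' + 1) => B ω j) ℙ) BadP = 0 := hBac hvol0
  have hpre : ℙ ((fun ω => fun j : Fin (k' + 1) => B ω j) ⁻¹' BadP) = 0 := by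
    have hle := Measure.le_map_apply (μ := (ℙ : Measure Ω)) hBmeas.aemeasurable BadP
    exact le_antisymm (hle.trans_eq hmap) zero_le
  rw [MeasureTheory.ae_iff]
  apply measure_mono_null _ hpre
  intro ω hω
  simp only [Set.mem_setOf_eq] at hω
  show (fun j : Fin (k' + 1) => B ω j) ∈ BadP
  rw [hBadP]
  simp only [Set.mem_setOf_eq]
  intro hinj
  apply hω
  have heq : (fun x : Fin (d 0) → ℝ => comp d f (B ω) (k' + 1) x) =
      fun x : Fin (d 0) → ℝ =>
        comp d f (extB (fun j : Fin (k' + 1) => B ω j)) (k' + 1) x := by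
    funext x
    apply comp_congr
    intro jj hjj
    exact (extB_lt (fun j : Fin (k' + 1) => B ω j) hjj).symm
  rw [heq]
  exact hinj
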